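/- For every f ∈ ℍ[X], every root of the formal derivative f′ is contained in the snail sn(f). -/

import Mathlib

open Polynomial

noncomputable section

/-- The real subalgebra `ℂ_I = ℝ·1 + ℝ·I` of `ℍ`, as an `ℝ`-submodule. -/
def CI (I : Quaternion ℝ) : Submodule ℝ (Quaternion ℝ) :=
  Submodule.span ℝ {1, I}

/-- The orthogonal projection `π_I : ℍ → ℂ_I`, viewed as a map `ℍ → ℍ`. -/
def piI (I : Quaternion ℝ) (a : Quaternion ℝ) : Quaternion ℝ :=
  ((CI I).orthogonalProjectionOnto a : Quaternion ℝ)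

/-- `f_I = ∑ₖ π_I(aₖ) Xᵏ`, the projection of the coefficients of `f` onto `ℂ_I`. -/
def polyProj (I : Quaternion ℝ) (f : Polynomial (Quaternion ℝ)) :
    Polynomial (Quaternion ℝ) :=
  f.sum fun k a => C (piI I a) * X ^ k


namespace SnailAux

variable {I : Quaternion ℝ}

lemma I_mul_I (hre : I.re = 0) (hnorm : ‖I‖ = 1) : I * I = -1 := by
  have hstar : star I = -I := Quaternion.star_eq_neg.2 hre
  have h1 : I * star I = ((Quaternion.normSq I : ℝ) : Quaternion ℝ) := Quaternion.self_mul_star I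
  have h2 : (Quaternion.normSq I : ℝ) = 1 := by
    rw [Quaternion.normSq_eq_norm_mul_self, hnorm, one_mul]
  rw [hstar, h2] at h1
  have : -(I * I) = 1 := by rw [← mul_neg, h1]; norm_num
  linear_combination (norm := noncomm_ring) -this

lemma one_mem_CI : (1 : Quaternion ℝ) ∈ CI I :=
  Submodule.subset_span (Set.mem_insert _ _)

lemma CI_eq_range (hII : I * I = -1) :
    CI I = LinearMap.range (Complex.liftAux I hII).toLinearMap := by
  apply le_antisymm
  · rw [CI, Submodule.span_le]
    intro x hx
    rcases hx with rfl | rfl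
    · exact ⟨1, by simp [AlgHom.toLinearMap_apply]⟩
    · exact ⟨Complex.I, by
        simpa [AlgHom.toLinearMap_apply] using Complex.liftAux_apply_I _ hII⟩
  · rintro x ⟨w, rfl⟩
    simp only [AlgHom.toLinearMap_apply, Complex.liftAux_apply]
    refine Submodule.add_mem _ ?_ ?_
    · rw [Algebra.algebraMap_eq_smul_one]
      exact Submodule.smul_mem _ _ one_mem_CI
    · exact Submodule.smul_mem _ _ (Submodule.subset_span (Set.mem_insert_of_mem _ rfl))

lemma real_mem_CI (r : ℝ) : ((r : ℝ) : Quaternion ℝ) ∈ CI I := by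
  rw [show ((r : ℝ) : Quaternion ℝ) = algebraMap ℝ (Quaternion ℝ) r from rfl,
    Algebra.algebraMap_eq_smul_one]
  exact Submodule.smul_mem _ _ one_mem_CI

lemma mul_mem_CI (hII : I * I = -1) {x y : Quaternion ℝ} (hx : x ∈ CI I) (hy : y ∈ CI I) :
    x * y ∈ CI I := by
  rw [CI_eq_range hII] at hx hy ⊢
  obtain ⟨zx, rfl⟩ := hx
  obtain ⟨zy, rfl⟩ := hy
  exact ⟨zx * zy, by simp [map_mul]⟩

lemma star_mem_CI (hre : I.re = 0) {x : Quaternion ℝ} (hx : x ∈ CI I) :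
    star x ∈ CI I := by
  have hstar : star I = -I := Quaternion.star_eq_neg.2 hre
  rw [CI] at hx ⊢
  induction hx using Submodule.span_induction with
  | mem x hx =>
    rcases hx with rfl | rfl
    · rw [star_one]; exact one_mem_CI
    · rw [hstar]
      exact Submodule.neg_mem _ (Submodule.subset_span (Set.mem_insert_of_mem _ rfl))
  | zero => simpa using Submodule.zero_mem _
  | add x y _ _ hx hy => rw [star_add]; exact Submodule.add_mem _ hx hy
  | smul c x _ hx => rw [Quaternion.star_smul]; exact Submodule.smul_mem _ _ hx

lemma pow_mem_CI (hII : I * I = -1) {x : Quaternion ℝ} (hx : x ∈ CI I) (k : ℕ) :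
    x ^ k ∈ CI I := by
  induction k with
  | zero => simpa using one_mem_CI
  | succ k ih => rw [pow_succ]; exact mul_mem_CI hII ih hx

/-- `piI` as a linear map. -/
def piILM (I : Quaternion ℝ) : Quaternion ℝ →ₗ[ℝ] Quaternion ℝ :=
  (CI I).subtype.comp (CI I).orthogonalProjectionOnto.toLinearMap

lemma piI_eq (a : Quaternion ℝ) : piI I a = piILM I a := rfl

lemma piI_mem (a : Quaternion ℝ) : piI I a ∈ CI I := ((CI I).orthogonalProjectionOnto a).2

lemma piI_of_mem {x : Quaternion ℝ} (hx : x ∈ CI I) : piI I x = x :=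
  Submodule.starProjection_eq_self_iff.2 hx

lemma piI_of_orth {x : Quaternion ℝ} (hx : x ∈ (CI I)ᗮ) : piI I x = 0 := by
  rw [piI, Submodule.orthogonalProjectionOnto_apply_of_mem_orthogonal hx,
    Submodule.coe_zero]

lemma mul_orth (hre : I.re = 0) (hII : I * I = -1) {w : Quaternion ℝ}
    (hw : w ∈ (CI I)ᗮ) {c : Quaternion ℝ} (hc : c ∈ CI I) : w * c ∈ (CI I)ᗮ := by
  rw [Submodule.mem_orthogonal]
  intro d hd
  have hdc : d * star c ∈ CI I := mul_mem_CI hII hd (star_mem_CI hre hc)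
  have h1 := (Submodule.mem_orthogonal _ w).1 hw (d * star c) hdc
  rw [Quaternion.inner_def] at h1 ⊢
  rw [star_mul, ← mul_assoc]
  exact h1

lemma piI_mul (hre : I.re = 0) (hII : I * I = -1) (a : Quaternion ℝ)
    {c : Quaternion ℝ} (hc : c ∈ CI I) : piI I (a * c) = piI I a * c := by
  have hsplit : a * c = piI I a * c + (a - piI I a) * c := by
    rw [← add_mul, add_sub_cancel]
  have h1 : piI I a * c ∈ CI I := mul_mem_CI hII (piI_mem a) hc
  have h2 : (a - piI I a) * c ∈ (CI I)ᗮ :=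
    mul_orth hre hII (Submodule.sub_starProjection_mem_orthogonal a) hc
  rw [hsplit, piI_eq, map_add, ← piI_eq, ← piI_eq, piI_of_mem h1, piI_of_orth h2, add_zero]

lemma polyProj_coeff (f : Polynomial (Quaternion ℝ)) (n : ℕ) :
    (polyProj I f).coeff n = piI I (f.coeff n) := by
  rw [polyProj]
  simp_rw [C_mul_X_pow_eq_monomial]
  rw [Polynomial.sum_def, finset_sum_coeff]
  simp_rw [coeff_monomial]
  rw [Finset.sum_ite_eq' f.support n (fun k => piI I (f.coeff k))]
  by_cases h : n ∈ f.support
  · rw [if_pos h]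
  · rw [if_neg h, Polynomial.notMem_support_iff.1 h, piI_eq, map_zero]

lemma derivative_polyProj (hre : I.re = 0) (hII : I * I = -1)
    (f : Polynomial (Quaternion ℝ)) :
    derivative (polyProj I f) = polyProj I (derivative f) := by
  refine Polynomial.ext fun n => ?_
  rw [coeff_derivative, polyProj_coeff, polyProj_coeff, coeff_derivative]
  have hmem : ((n : Quaternion ℝ) + 1) ∈ CI I := by
    rw [show ((n : Quaternion ℝ) + 1) = (((n : ℝ) + 1 : ℝ) : Quaternion ℝ) by push_cast; ring]
    exact real_mem_CI _
  rw [piI_mul hre hII _ hmem]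

lemma eval_polyProj (hre : I.re = 0) (hII : I * I = -1)
    (p : Polynomial (Quaternion ℝ)) {x : Quaternion ℝ} (hx : x ∈ CI I) :
    Polynomial.eval x (polyProj I p) = piI I (Polynomial.eval x p) := by
  calc Polynomial.eval x (polyProj I p)
      = ∑ k ∈ p.support, piI I (p.coeff k) * x ^ k := by
        rw [polyProj, Polynomial.sum_def, eval_finset_sum]
        exact Finset.sum_congr rfl fun k _ => by
          rw [C_mul_X_pow_eq_monomial, eval_monomial]
    _ = ∑ k ∈ p.support, piILM I (p.coeff k * x ^ k) :=
        Finset.sum_congr rfl fun k _ =>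
          by rw [← piI_eq]; exact (piI_mul hre hII (p.coeff k) (pow_mem_CI hII hx k)).symm
    _ = piILM I (∑ k ∈ p.support, p.coeff k * x ^ k) := (map_sum _ _ _).symm
    _ = piI I (Polynomial.eval x p) := by
        rw [← piI_eq, Polynomial.eval_eq_sum, Polynomial.sum_def]

end SnailAux

lemma derivative_finset_prod {ι : Type*} [DecidableEq ι] (t : Finset ι) (P : ι → Polynomial ℂ) :
    derivative (∏ i ∈ t, P i) = ∑ i ∈ t, (∏ j ∈ t.erase i, P j) * derivative (P i) := by
  induction t using Finset.induction_on with
  | empty => simp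
  | @insert i t hi ih =>
    rw [Finset.prod_insert hi, derivative_mul, ih, Finset.sum_insert hi,
      Finset.erase_insert hi, Finset.mul_sum]
    congr 1
    · ring
    · refine Finset.sum_congr rfl fun j hj => ?_
      rw [Finset.erase_insert_of_ne (by rintro rfl; exact hi hj),
        Finset.prod_insert (fun h => hi (Finset.mem_of_mem_erase h))]
      ring

lemma gaussLucas (g : Polynomial ℂ) (hg : 0 < g.natDegree) (z : ℂ)
    (hz : Polynomial.eval z (derivative g) = 0) :
    z ∈ convexHull ℝ {w : ℂ | Polynomial.eval w g = 0} := by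
  by_cases h0 : Polynomial.eval z g = 0
  · exact subset_convexHull ℝ _ h0
  have hg0 : g ≠ 0 := fun h => by simp [h] at hg
  have hsplit : g.Splits := IsAlgClosed.splits g
  set L : List ℂ := g.roots.toList with hLdef
  have hsL : (L : Multiset ℂ) = g.roots := g.roots.coe_toList
  set n := L.length with hn
  set a : Fin n → ℂ := L.get with ha
  have hofn : List.ofFn a = L := List.ofFn_get L
  have hnpos : 0 < n := by
    have hcard : g.roots.card = g.natDegree := splits_iff_card_roots.1 hsplit
    have : n = g.natDegree := by rw [hn, ← hcard, ← hsL, Multiset.coe_card]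
    omega
  have hroot : ∀ i, Polynomial.eval (a i) g = 0 := fun i => by
    have hm : a i ∈ g.roots := by rw [← hsL]; exact List.get_mem L i
    exact (mem_roots hg0).1 hm
  set lc := g.leadingCoeff with hlcdef
  have hlc : lc ≠ 0 := leadingCoeff_ne_zero.2 hg0
  have hprod : g = C lc * ∏ i : Fin n, (X - C (a i)) := by
    have h1 := hsplit.eq_prod_roots
    rw [h1]; congr 1
    rw [← hsL, ← hofn, Multiset.map_coe, Multiset.prod_coe, List.map_ofFn, List.prod_ofFn]
    rfl
  set u : Fin n → ℂ := fun i => z - a i with hu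
  have hune : ∀ i, u i ≠ 0 := fun i => sub_ne_zero.2 fun h => h0 (h ▸ hroot i)
  have hPne : ∏ i, u i ≠ 0 := Finset.prod_ne_zero_iff.2 fun i _ => hune i
  have hder : Polynomial.eval z (derivative g) = lc * ∑ i, ∏ j ∈ Finset.univ.erase i, u j := by
    rw [hprod, derivative_C_mul, derivative_finset_prod]
    simp [eval_finset_sum, eval_mul, eval_prod, Finset.mul_sum]
    rfl
  have hsum0 : ∑ i, ∏ j ∈ Finset.univ.erase i, u j = 0 := by
    rcases mul_eq_zero.1 (hder ▸ hz) with h | h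
    · exact absurd h hlc
    · exact h
  have hinv0 : ∑ i, (u i)⁻¹ = 0 := by
    have h1 : ∀ i : Fin n, ∏ j ∈ Finset.univ.erase i, u j = (u i)⁻¹ * ∏ j, u j := by
      intro i
      rw [← Finset.mul_prod_erase Finset.univ u (Finset.mem_univ i),
        inv_mul_cancel_left₀ (hune i)]
    have h5 : (∑ i, (u i)⁻¹) * ∏ j, u j = 0 := by
      rw [Finset.sum_mul, ← hsum0]
      exact Finset.sum_congr rfl fun i _ => (h1 i).symm
    rcases mul_eq_zero.1 h5 with h | h
    · exact h
    · exact absurd h hPne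
  set c : Fin n → ℝ := fun i => (Complex.normSq (u i))⁻¹ with hc
  have hcpos : ∀ i, 0 < c i := fun i =>
    inv_pos.2 (Complex.normSq_pos.2 (hune i))
  have hkey : ∑ i, c i • u i = 0 := by
    have h2 : ∀ i, c i • u i = ((starRingEnd ℂ) (u i))⁻¹ := by
      intro i
      rw [Complex.inv_def, Complex.normSq_conj, Complex.conj_conj, Complex.real_smul, hc]
      push_cast
      ring
    rw [Finset.sum_congr rfl fun i _ => h2 i, ← map_zero (starRingEnd ℂ), ← hinv0, map_sum]
    exact Finset.sum_congr rfl fun i _ => (map_inv₀ (starRingEnd ℂ) (u i)).symm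
  have hW : 0 < ∑ i, c i :=
    Finset.sum_pos (fun i _ => hcpos i) (Finset.univ_nonempty_iff.2 ⟨⟨0, hnpos⟩⟩)
  have hcm : Finset.univ.centerMass c a = z := by
    have h3 : (∑ i, c i) • z = ∑ i, c i • a i := by
      have := hkey
      simp only [hu, smul_sub] at this
      rw [Finset.sum_sub_distrib, sub_eq_zero] at this
      rw [← this, Finset.sum_smul]
    rw [Finset.centerMass, ← h3, smul_smul, inv_mul_cancel₀ hW.ne', one_smul]
  rw [← hcm]
  exact Finset.centerMass_mem_convexHull Finset.univ (fun i _ => (hcpos i).le) hW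
    (fun i _ => hroot i)

lemma norm_eq_one_of_normSq (J : Quaternion ℝ) (h : Quaternion.normSq J = 1) :
    ‖J‖ = 1 := by
  have h2 : ‖J‖ * ‖J‖ = 1 := by rw [← Quaternion.normSq_eq_norm_mul_self, h]
  nlinarith [norm_nonneg J]

lemma exists_pure_unit : ∃ J : Quaternion ℝ, J.re = 0 ∧ ‖J‖ = 1 :=
  ⟨⟨0, 1, 0, 0⟩, rfl, norm_eq_one_of_normSq _ ((Quaternion.normSq_def' _).trans (by norm_num))⟩


open scoped Classical in
/-- `K_{ℂ_I}(f_I)`: the convex hull of the roots of `f_I` in `ℂ_I` if `f_I` is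
nonconstant, and all of `ℂ_I` otherwise. -/
def KSet (I : Quaternion ℝ) (f : Polynomial (Quaternion ℝ)) : Set (Quaternion ℝ) :=
  if 0 < (polyProj I f).natDegree then
    convexHull ℝ {r : Quaternion ℝ | r ∈ CI I ∧ Polynomial.eval r (polyProj I f) = 0}
  else (CI I : Set (Quaternion ℝ))

/-- The Gauss–Lucas snail `sn(f) = ⋃_I K_{ℂ_I}(f_I)`, the union over all `I`
of trace `0` and norm `1`. -/
def snail (f : Polynomial (Quaternion ℝ)) : Set (Quaternion ℝ) :=
  ⋃ (I : Quaternion ℝ) (_ : I.re = 0 ∧ ‖I‖ = 1), KSet I f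

/- Theorem 4.9 (specialized to ℍ): the roots of `f′` are contained in `sn(f)`. -/
open SnailAux in
theorem critical_points_mem_snail
    (f : Polynomial (Quaternion ℝ)) (r : Quaternion ℝ)
    (hr : Polynomial.eval r (derivative f) = 0) :
    r ∈ snail f := by
  obtain ⟨I, hre, hnorm, x, y, hr_eq⟩ :
      ∃ I : Quaternion ℝ, I.re = 0 ∧ ‖I‖ = 1 ∧
        ∃ x y : ℝ, r = algebraMap ℝ (Quaternion ℝ) x + y • I := by
    by_cases him : r.im = 0
    · obtain ⟨J, hJre, hJnorm⟩ := exists_pure_unit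
      refine ⟨J, hJre, hJnorm, r.re, 0, ?_⟩
      rw [zero_smul, add_zero]
      have := r.re_add_im
      rw [him, add_zero] at this
      rw [← this]; rfl
    · refine ⟨‖r.im‖⁻¹ • r.im, ?_, ?_, r.re, ‖r.im‖, ?_⟩
      · simp [Quaternion.re_smul]
      · rw [norm_smul, norm_inv, norm_norm, inv_mul_cancel₀ (norm_ne_zero_iff.2 him)]
      · rw [smul_smul, mul_inv_cancel₀ (norm_ne_zero_iff.2 him), one_smul]
        rw [show algebraMap ℝ (Quaternion ℝ) r.re = ((r.re : ℝ) : Quaternion ℝ) from rfl]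
        exact r.re_add_im.symm
  have hII : I * I = -1 := I_mul_I hre hnorm
  set ι := Complex.liftAux I hII with hι
  set z : ℂ := ⟨x, y⟩ with hzdef
  have hz : ι z = r := by
    rw [hι, Complex.liftAux_apply, hr_eq]
  have hrCI : r ∈ CI I := by
    rw [CI_eq_range hII]
    exact ⟨z, hz⟩
  have hinj : Function.Injective ι := ι.toRingHom.injective
  obtain ⟨G, hG⟩ : ∃ G : Polynomial ℂ, G.map ι.toRingHom = polyProj I f := by
    rw [← Polynomial.mem_lifts, Polynomial.lifts_iff_coeff_lifts]
    intro k
    rw [polyProj_coeff]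
    have h := piI_mem (I := I) (f.coeff k)
    rw [CI_eq_range hII] at h
    obtain ⟨w, hw⟩ := h
    exact ⟨w, hw⟩
  have h1 : Polynomial.eval r (polyProj I (derivative f)) = 0 := by
    rw [eval_polyProj hre hII _ hrCI, hr, piI_eq, map_zero]
  have h2 : Polynomial.eval r (Polynomial.map ι.toRingHom (derivative G)) = 0 := by
    rw [← derivative_map, hG, derivative_polyProj hre hII]
    exact h1
  have h3 : Polynomial.eval z (derivative G) = 0 := by
    apply hinj
    rw [← hz, Polynomial.eval_map] at h2
    rw [map_zero]
    calc ι (Polynomial.eval z (derivative G))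
        = Polynomial.eval₂ ι.toRingHom (ι.toRingHom z) (derivative G) :=
          (Polynomial.eval₂_at_apply ι.toRingHom z).symm
      _ = 0 := h2
  rw [snail, Set.mem_iUnion]
  refine ⟨I, Set.mem_iUnion.2 ⟨⟨hre, hnorm⟩, ?_⟩⟩
  rw [KSet]
  split_ifs with hdeg
  · have hdegG : 0 < G.natDegree := by
      rwa [← hG, Polynomial.natDegree_map ι.toRingHom] at hdeg
    have hzmem := gaussLucas G hdegG z h3
    have himg : r ∈ ι.toLinearMap '' (convexHull ℝ {w : ℂ | Polynomial.eval w G = 0}) :=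
      ⟨z, hzmem, by rw [AlgHom.toLinearMap_apply, hz]⟩
    rw [ι.toLinearMap.image_convexHull] at himg
    refine convexHull_mono ?_ himg
    rintro _ ⟨w, hw, rfl⟩
    rw [AlgHom.toLinearMap_apply]
    constructor
    · rw [CI_eq_range hII]; exact ⟨w, rfl⟩
    · rw [← hG, Polynomial.eval_map]
      calc Polynomial.eval₂ ι.toRingHom (ι w) G
          = Polynomial.eval₂ ι.toRingHom (ι.toRingHom w) G := rfl
        _ = ι.toRingHom (Polynomial.eval w G) := Polynomial.eval₂_at_apply ι.toRingHom w
        _ = 0 := by rw [hw]; exact map_zero _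
  · exact hrCI
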